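/- Let R > 4 and Λ ≥ 2. Then for every compact set K ⊂ (0, ∞)^{L_R*} there exists Δ_K > 0 such that for every f ∈ K, ∑_{p∈L_R*} Q^{NR}_p[f]·(−1/f_p) ≤ −Δ_K. -/

import Mathlib

open scoped BigOperators Classical

/-- Euclidean norm of a point of the integer lattice `ℤ³`. -/
noncomputable def enorm3 (p : Fin 3 → ℤ) : ℝ := Real.sqrt (∑ i, ((p i : ℝ))^2)

/-- The truncated lattice `L_R* = {p ∈ ℤ³ : 0 < |p| < R}` (as a finite set). -/
noncomputable def latticeBall (R : ℝ) : Finset (Fin 3 → ℤ) :=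
  (Finset.Icc (fun _ => (-⌈R⌉ : ℤ)) (fun _ => (⌈R⌉ : ℤ))).filter
    (fun p => 0 < enorm3 p ∧ enorm3 p < R)

/-- Right-hand side of the discrete exact-resonance acoustic wave kinetic system, with
kernel `V_{p₁,p₂,p₃} = |p₁||p₂||p₃|` and phonon dispersion `ω(p) = |p|`. -/
noncomputable def Qres (R : ℝ) (f : (Fin 3 → ℤ) → ℝ) (p1 : Fin 3 → ℤ) : ℝ :=
  (∑ p2 ∈ latticeBall R, ∑ p3 ∈ latticeBall R,
      if p1 = p2 + p3 ∧ enorm3 p1 = enorm3 p2 + enorm3 p3 then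
        enorm3 p1 * enorm3 p2 * enorm3 p3 *
          (f p2 * f p3 - f p1 * (f p2 + f p3)) else 0)
  - 2 * ∑ p2 ∈ latticeBall R, ∑ p3 ∈ latticeBall R,
      if p3 = p1 + p2 ∧ enorm3 p3 = enorm3 p1 + enorm3 p2 then
        enorm3 p1 * enorm3 p2 * enorm3 p3 *
          (f p1 * f p2 - f p3 * (f p1 + f p2)) else 0

/-- Right-hand side of the discrete near-resonance acoustic wave kinetic system with
resonance broadening `Λ`. -/
noncomputable def QNR (R Λ : ℝ) (f : (Fin 3 → ℤ) → ℝ) (p1 : Fin 3 → ℤ) : ℝ :=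
  (∑ p2 ∈ latticeBall R, ∑ p3 ∈ latticeBall R,
      if p1 = p2 + p3 ∧ |enorm3 p1 - enorm3 p2 - enorm3 p3| ≤ Λ then
        enorm3 p1 * enorm3 p2 * enorm3 p3 *
          (f p2 * f p3 - f p1 * (f p2 + f p3)) else 0)
  - 2 * ∑ p2 ∈ latticeBall R, ∑ p3 ∈ latticeBall R,
      if p3 = p1 + p2 ∧ |enorm3 p3 - enorm3 p1 - enorm3 p2| ≤ Λ then
        enorm3 p1 * enorm3 p2 * enorm3 p3 *
          (f p1 * f p2 - f p3 * (f p1 + f p2)) else 0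

/-- Extend a state defined on the truncated lattice `L_R*` by zero to all of `ℤ³`. -/
noncomputable def extendLB (R : ℝ) (g : {p // p ∈ latticeBall R} → ℝ) :
    (Fin 3 → ℤ) → ℝ :=
  fun p => if h : p ∈ latticeBall R then g ⟨p, h⟩ else 0

/- ### Auxiliary lemmas -/

lemma enorm3_nonneg (p : Fin 3 → ℤ) : 0 ≤ enorm3 p := Real.sqrt_nonneg _

lemma sum_rot3 {α : Type*} (s : Finset α) (h : α → α → α → ℝ) :
    ∑ a ∈ s, ∑ b ∈ s, ∑ c ∈ s, h a b c = ∑ b ∈ s, ∑ c ∈ s, ∑ a ∈ s, h a b c := by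
  rw [Finset.sum_comm]
  exact Finset.sum_congr rfl fun b _ => Finset.sum_comm

lemma dsum_mul {α : Type*} (s : Finset α) (C : α → α → Prop) [∀ a b, Decidable (C a b)]
    (t : α → α → ℝ) (x : ℝ) :
    (∑ b ∈ s, ∑ c ∈ s, if C b c then t b c else 0) * x
      = ∑ b ∈ s, ∑ c ∈ s, if C b c then t b c * x else 0 := by
  rw [Finset.sum_mul]
  refine Finset.sum_congr rfl fun b _ => ?_
  rw [Finset.sum_mul]
  refine Finset.sum_congr rfl fun c _ => ?_
  split_ifs <;> simp

/-- The entropy production term for one triple. -/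
noncomputable def ET (Λ : ℝ) (f : (Fin 3 → ℤ) → ℝ) (a b c : Fin 3 → ℤ) : ℝ :=
  if a = b + c ∧ |enorm3 a - enorm3 b - enorm3 c| ≤ Λ then
    enorm3 a * enorm3 b * enorm3 c *
      (f b * f c - f a * f b - f a * f c)^2 / (f a * f b * f c) else 0

lemma ET_nonneg (Λ : ℝ) (f : (Fin 3 → ℤ) → ℝ) (a b c : Fin 3 → ℤ)
    (ha : 0 < f a) (hb : 0 < f b) (hc : 0 < f c) : 0 ≤ ET Λ f a b c := by
  unfold ET
  split_ifs
  · exact div_nonneg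
      (mul_nonneg (mul_nonneg (mul_nonneg (enorm3_nonneg a) (enorm3_nonneg b))
        (enorm3_nonneg c)) (sq_nonneg _))
      (le_of_lt (mul_pos (mul_pos ha hb) hc))
  · exact le_refl 0

lemma entropy_identity (R Λ : ℝ) (f : (Fin 3 → ℤ) → ℝ)
    (hf : ∀ p ∈ latticeBall R, 0 < f p) :
    ∑ p ∈ latticeBall R, QNR R Λ f p * (1 / f p)
      = ∑ a ∈ latticeBall R, ∑ b ∈ latticeBall R, ∑ c ∈ latticeBall R, ET Λ f a b c := by
  set B := latticeBall R with hB
  set n := enorm3 with hn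
  have hA : ∑ p ∈ B, QNR R Λ f p * (1 / f p)
      = (∑ a ∈ B, ∑ b ∈ B, ∑ c ∈ B,
          if a = b + c ∧ |n a - n b - n c| ≤ Λ then
            n a * n b * n c * (f b * f c - f a * (f b + f c)) * (1 / f a) else 0)
        - 2 * ∑ a ∈ B, ∑ b ∈ B, ∑ c ∈ B,
          if c = a + b ∧ |n c - n a - n b| ≤ Λ then
            n a * n b * n c * (f a * f b - f c * (f a + f b)) * (1 / f a) else 0 := by
    unfold QNR
    rw [Finset.sum_congr rfl (fun p _ => by
      rw [sub_mul, mul_assoc,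
        dsum_mul B (fun b c => p = b + c ∧ |n p - n b - n c| ≤ Λ)
          (fun b c => n p * n b * n c * (f b * f c - f p * (f b + f c))) (1 / f p),
        dsum_mul B (fun b c => c = p + b ∧ |n c - n p - n b| ≤ Λ)
          (fun b c => n p * n b * n c * (f p * f b - f c * (f p + f b))) (1 / f p)]),
      Finset.sum_sub_distrib, ← Finset.mul_sum]
  rw [hA]
  set D2 : ℝ := ∑ a ∈ B, ∑ b ∈ B, ∑ c ∈ B,
      if c = a + b ∧ |n c - n a - n b| ≤ Λ then
        n a * n b * n c * (f a * f b - f c * (f a + f b)) * (1 / f a) else 0 with hD2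
  have hD2a : D2 = ∑ a ∈ B, ∑ b ∈ B, ∑ c ∈ B,
      if a = b + c ∧ |n a - n b - n c| ≤ Λ then
        n b * n c * n a * (f b * f c - f a * (f b + f c)) * (1 / f b) else 0 := by
    rw [hD2, sum_rot3, sum_rot3]
  have hD2b : D2 = ∑ a ∈ B, ∑ b ∈ B, ∑ c ∈ B,
      if a = c + b ∧ |n a - n c - n b| ≤ Λ then
        n c * n b * n a * (f c * f b - f a * (f c + f b)) * (1 / f c) else 0 := by
    rw [hD2, sum_rot3, sum_rot3]
    exact Finset.sum_congr rfl fun a _ => Finset.sum_comm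
  have h2 : 2 * D2
      = (∑ a ∈ B, ∑ b ∈ B, ∑ c ∈ B,
          if a = b + c ∧ |n a - n b - n c| ≤ Λ then
            n b * n c * n a * (f b * f c - f a * (f b + f c)) * (1 / f b) else 0)
        + ∑ a ∈ B, ∑ b ∈ B, ∑ c ∈ B,
          if a = c + b ∧ |n a - n c - n b| ≤ Λ then
            n c * n b * n a * (f c * f b - f a * (f c + f b)) * (1 / f c) else 0 := by
    rw [two_mul]
    exact congrArg₂ (· + ·) hD2a hD2b
  rw [h2, ← Finset.sum_add_distrib, ← Finset.sum_sub_distrib]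
  refine Finset.sum_congr rfl fun a ha => ?_
  rw [← Finset.sum_add_distrib, ← Finset.sum_sub_distrib]
  refine Finset.sum_congr rfl fun b hb => ?_
  rw [← Finset.sum_add_distrib, ← Finset.sum_sub_distrib]
  refine Finset.sum_congr rfl fun c hc => ?_
  have hC : (a = c + b ∧ |n a - n c - n b| ≤ Λ) ↔ (a = b + c ∧ |n a - n b - n c| ≤ Λ) := by
    rw [add_comm c b, sub_right_comm]
  simp only [hC]
  have hfa := hf a ha
  have hfb := hf b hb
  have hfc := hf c hc
  unfold ET
  rw [← hn]
  split_ifs with h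
  · field_simp
    ring
  · simp

lemma triple_sum_ge {α : Type*} (S : Finset α) (T : α → α → α → ℝ)
    (hT : ∀ a ∈ S, ∀ b ∈ S, ∀ c ∈ S, 0 ≤ T a b c)
    (a0 : α) (ha0 : a0 ∈ S) (b0 : α) (hb0 : b0 ∈ S) (c0 : α) (hc0 : c0 ∈ S) :
    T a0 b0 c0 ≤ ∑ a ∈ S, ∑ b ∈ S, ∑ c ∈ S, T a b c := by
  calc T a0 b0 c0 ≤ ∑ c ∈ S, T a0 b0 c :=
        Finset.single_le_sum (fun c hc => hT a0 ha0 b0 hb0 c hc) hc0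
    _ ≤ ∑ b ∈ S, ∑ c ∈ S, T a0 b c :=
        Finset.single_le_sum
          (fun b hb => Finset.sum_nonneg fun c hc => hT a0 ha0 b hb c hc) hb0
    _ ≤ ∑ a ∈ S, ∑ b ∈ S, ∑ c ∈ S, T a b c :=
        Finset.single_le_sum
          (fun a ha => Finset.sum_nonneg fun b hb =>
            Finset.sum_nonneg fun c hc => hT a ha b hb c hc) ha0

set_option maxHeartbeats 2000000 in
theorem uniform_dissipation_on_compacts (R Λ : ℝ) (hR : 4 < R) (hΛ : 2 ≤ Λ)
    (K : Set ({p // p ∈ latticeBall R} → ℝ)) (hK : IsCompact K)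
    (hKpos : ∀ g ∈ K, ∀ p, 0 < g p) :
    ∃ Δ : ℝ, 0 < Δ ∧ ∀ g ∈ K,
      ∑ p ∈ (latticeBall R).attach,
        QNR R Λ (extendLB R g) p.val * (-(1 / g p)) ≤ -Δ := by
  classical
  rcases Set.eq_empty_or_nonempty K with hKe | hne
  · exact ⟨1, one_pos, by simp [hKe]⟩
  set φ : ({p // p ∈ latticeBall R} → ℝ) → ℝ := fun g =>
    ∑ p ∈ (latticeBall R).attach, QNR R Λ (extendLB R g) p.val * (-(1 / g p)) with hφdef
  -- continuity of the extension in g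
  have hcontExt : ∀ q : Fin 3 → ℤ,
      Continuous fun g : {p // p ∈ latticeBall R} → ℝ => extendLB R g q := by
    intro q
    unfold extendLB
    by_cases h : q ∈ latticeBall R
    · simp only [dif_pos h]
      exact continuous_apply _
    · simp only [dif_neg h]
      exact continuous_const
  have hcontQ : ∀ p : Fin 3 → ℤ,
      Continuous fun g : {p // p ∈ latticeBall R} → ℝ => QNR R Λ (extendLB R g) p := by
    intro p
    unfold QNR
    apply Continuous.sub
    · apply continuous_finset_sum
      intro b _
      apply continuous_finset_sum
      intro c _
      by_cases h : p = b + c ∧ |enorm3 p - enorm3 b - enorm3 c| ≤ Λ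
      · simp only [if_pos h]
        exact continuous_const.mul (((hcontExt b).mul (hcontExt c)).sub
          ((hcontExt p).mul ((hcontExt b).add (hcontExt c))))
      · simp only [if_neg h]
        exact continuous_const
    · apply Continuous.mul continuous_const
      apply continuous_finset_sum
      intro b _
      apply continuous_finset_sum
      intro c _
      by_cases h : c = p + b ∧ |enorm3 c - enorm3 p - enorm3 b| ≤ Λ
      · simp only [if_pos h]
        exact continuous_const.mul (((hcontExt p).mul (hcontExt b)).sub
          ((hcontExt c).mul ((hcontExt p).add (hcontExt b))))
      · simp only [if_neg h]
        exact continuous_const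
  have hφcont : ContinuousOn φ K := by
    apply continuousOn_finset_sum
    intro p _
    apply ContinuousOn.mul (hcontQ p.val).continuousOn
    apply ContinuousOn.neg
    apply ContinuousOn.div continuousOn_const (continuous_apply p).continuousOn
    intro g hg
    exact ne_of_gt (hKpos g hg p)
  obtain ⟨g0, hg0K, hmax⟩ := hK.exists_isMaxOn hne hφcont
  -- main negativity estimate: φ g < 0 for every g ∈ K
  have hneg : ∀ g ∈ K, φ g < 0 := by
    intro g hg
    set f : (Fin 3 → ℤ) → ℝ := extendLB R g with hfdef
    have hf : ∀ p ∈ latticeBall R, 0 < f p := by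
      intro p hp
      rw [hfdef]
      unfold extendLB
      rw [dif_pos hp]
      exact hKpos g hg _
    have hgp : ∀ p : {p // p ∈ latticeBall R}, g p = f p.val := by
      intro p
      rw [hfdef]
      unfold extendLB
      rw [dif_pos p.2]
    have hφg : φ g = -∑ a ∈ latticeBall R, ∑ b ∈ latticeBall R, ∑ c ∈ latticeBall R,
        ET Λ f a b c := by
      rw [hφdef]
      simp only
      rw [Finset.sum_congr rfl (fun p _ => by
        rw [hgp p, show QNR R Λ f ↑p * (-(1 / f ↑p)) = -(QNR R Λ f ↑p * (1 / f ↑p)) by ring]),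
        Finset.sum_neg_distrib,
        Finset.sum_attach (latticeBall R) (fun p => QNR R Λ f p * (1 / f p)),
        entropy_identity R Λ f hf]
    -- the three special lattice points
    have hceil : (2:ℤ) ≤ ⌈R⌉ := by
      have h1 : (4:ℝ) ≤ (⌈R⌉ : ℝ) := le_trans (le_of_lt hR) (Int.le_ceil R)
      have : (4:ℤ) ≤ ⌈R⌉ := by exact_mod_cast h1
      omega
    have hn1 : enorm3 ![1,0,0] = 1 := by
      unfold enorm3
      rw [Fin.sum_univ_three]
      norm_num
      rfl
    have hn2 : enorm3 ![2,0,0] = 2 := by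
      unfold enorm3
      rw [Fin.sum_univ_three]
      norm_num
      rw [show (![2,0,0] : Fin 3 → ℤ) 2 = 0 from rfl]
      norm_num
    have hnm : enorm3 ![-1,0,0] = 1 := by
      unfold enorm3
      rw [Fin.sum_univ_three]
      norm_num
      rfl
    have hmem : ∀ v : Fin 3 → ℤ, (∀ i, |v i| ≤ 2) → 0 < enorm3 v → enorm3 v < R →
        v ∈ latticeBall R := by
      intro v hv h0 hR'
      unfold latticeBall
      rw [Finset.mem_filter, Finset.mem_Icc]
      refine ⟨⟨fun i => ?_, fun i => ?_⟩, h0, hR'⟩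
      · show -⌈R⌉ ≤ v i
        have := (abs_le.mp (hv i)).1; omega
      · show v i ≤ ⌈R⌉
        have := (abs_le.mp (hv i)).2; omega
    have hm1 : (![1,0,0] : Fin 3 → ℤ) ∈ latticeBall R := by
      refine hmem _ (fun i => by fin_cases i <;> simp) ?_ ?_
      · rw [hn1]; norm_num
      · rw [hn1]; linarith
    have hm2 : (![2,0,0] : Fin 3 → ℤ) ∈ latticeBall R := by
      refine hmem _ (fun i => by fin_cases i <;> simp) ?_ ?_
      · rw [hn2]; norm_num
      · rw [hn2]; linarith
    have hmm : (![-1,0,0] : Fin 3 → ℤ) ∈ latticeBall R := by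
      refine hmem _ (fun i => by fin_cases i <;> simp) ?_ ?_
      · rw [hnm]; norm_num
      · rw [hnm]; linarith
    have hadd1 : (![2,0,0] : Fin 3 → ℤ) = ![1,0,0] + ![1,0,0] := by
      funext i; fin_cases i <;> rfl
    have hadd2 : (![1,0,0] : Fin 3 → ℤ) = ![2,0,0] + ![-1,0,0] := by
      funext i; fin_cases i <;> rfl
    set x := f ![2,0,0] with hx
    set y := f ![1,0,0] with hy
    set z := f ![-1,0,0] with hz
    have hxp : 0 < x := hf _ hm2
    have hyp : 0 < y := hf _ hm1
    have hzp : 0 < z := hf _ hmm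
    have hSpos : 0 < ∑ a ∈ latticeBall R, ∑ b ∈ latticeBall R, ∑ c ∈ latticeBall R,
        ET Λ f a b c := by
      by_cases hbr : y * y - x * y - x * y = 0
      · -- then y = 2x and the second triple has nonzero bracket
        have hy2x : y = 2 * x := by
          have h0 : (y - 2 * x) * y = 0 := by ring_nf; linarith [hbr]
          rcases mul_eq_zero.mp h0 with h | h
          · linarith [sub_eq_zero.mp h]
          · exact absurd h (ne_of_gt hyp)
        have hbr2 : x * z - y * x - y * z ≠ 0 := by
          rw [hy2x]; nlinarith
        have hET2 : 0 < ET Λ f ![1,0,0] ![2,0,0] ![-1,0,0] := by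
          unfold ET
          rw [if_pos ⟨hadd2, by rw [hn1, hn2, hnm]; rw [show |(1:ℝ) - 2 - 1| = 2 by norm_num]; exact hΛ⟩]
          rw [hn1, hn2, hnm]
          apply div_pos
          · have : 0 < (x * z - y * x - y * z)^2 := by positivity
            nlinarith
          · exact mul_pos (mul_pos hyp hxp) hzp
        calc (0:ℝ) < ET Λ f ![1,0,0] ![2,0,0] ![-1,0,0] := hET2
          _ ≤ _ := triple_sum_ge (latticeBall R) (ET Λ f)
              (fun a ha' b hb' c hc' => ET_nonneg Λ f a b c (hf a ha') (hf b hb') (hf c hc'))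
              _ hm1 _ hm2 _ hmm
      · have hET1 : 0 < ET Λ f ![2,0,0] ![1,0,0] ![1,0,0] := by
          unfold ET
          rw [if_pos ⟨hadd1, by rw [hn1, hn2]; rw [show |(2:ℝ) - 1 - 1| = 0 by norm_num]; linarith⟩]
          rw [hn1, hn2]
          apply div_pos
          · have : 0 < (y * y - x * y - x * y)^2 := by positivity
            nlinarith
          · exact mul_pos (mul_pos hxp hyp) hyp
        calc (0:ℝ) < ET Λ f ![2,0,0] ![1,0,0] ![1,0,0] := hET1
          _ ≤ _ := triple_sum_ge (latticeBall R) (ET Λ f)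
              (fun a ha' b hb' c hc' => ET_nonneg Λ f a b c (hf a ha') (hf b hb') (hf c hc'))
              _ hm2 _ hm1 _ hm1
    rw [hφg]
    linarith
  refine ⟨-φ g0, ?_, ?_⟩
  · have := hneg g0 hg0K
    linarith
  · intro g hg
    rw [neg_neg]
    exact hmax hg
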